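/- Let A be symmetric positive definite where λ_max(A) and λ_min(A) are simple eigenvalues with unit eigenvectors x₁ and x_n. Then d = e (the all-ones vector, i.e., no rescaling) is a stationary point of d ↦ κ(A Diag(d)) if and only if x₁ ∘ x₁ = x_n ∘ x_n (entrywise equality of the squares of the eigenvector entries). -/

import Mathlib

open Matrix


lemma aux_dot_eq {n : ℕ} {M : Matrix (Fin n) (Fin n) ℝ} (hM : M.IsHermitian) (x : Fin n → ℝ) :
    x ⬝ᵥ (M *ᵥ x) = ∑ i, hM.eigenvalues i * (x ᵥ* (hM.eigenvectorUnitary : Matrix (Fin n) (Fin n) ℝ)) i ^ 2 ∧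
    x ⬝ᵥ x = ∑ i, (x ᵥ* (hM.eigenvectorUnitary : Matrix (Fin n) (Fin n) ℝ)) i ^ 2 := by
  set U : Matrix (Fin n) (Fin n) ℝ := (hM.eigenvectorUnitary : Matrix (Fin n) (Fin n) ℝ) with hU
  set y : Fin n → ℝ := x ᵥ* U with hy
  have hstar : star U = Uᵀ := U.conjTranspose_eq_transpose_of_trivial
  have hUU : U * star U = 1 := (Matrix.mem_unitaryGroup_iff).mp hM.eigenvectorUnitary.2
  have h2 : star U *ᵥ x = y := by rw [hstar, Matrix.mulVec_transpose]
  constructor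
  · conv_lhs => rw [hM.spectral_theorem, Unitary.conjStarAlgAut_apply]
    rw [← Matrix.mulVec_mulVec, ← Matrix.mulVec_mulVec, Matrix.dotProduct_mulVec]
    have h1 : x ᵥ* U = y := rfl
    rw [h1, h2]
    simp only [dotProduct, Matrix.mulVec_diagonal, RCLike.ofReal_real_eq_id,
      Function.comp_apply, id_eq]
    exact Finset.sum_congr rfl fun i _ => by ring
  · have hxy : x ⬝ᵥ x = y ⬝ᵥ y := by
      have : y ⬝ᵥ y = y ⬝ᵥ (star U *ᵥ x) := by rw [h2]
      rw [this, Matrix.dotProduct_mulVec, hy, Matrix.vecMul_vecMul, hUU, Matrix.vecMul_one]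
    rw [hxy]
    simp [dotProduct, pow_two]

lemma aux_rayleigh {n : ℕ} {M : Matrix (Fin n) (Fin n) ℝ} (hM : M.IsHermitian) (x : Fin n → ℝ) :
    sInf (spectrum ℝ M) * (x ⬝ᵥ x) ≤ x ⬝ᵥ (M *ᵥ x) ∧
    x ⬝ᵥ (M *ᵥ x) ≤ sSup (spectrum ℝ M) * (x ⬝ᵥ x) := by
  obtain ⟨h1, h2⟩ := aux_dot_eq hM x
  have hbddA : BddAbove (spectrum ℝ M) := (Matrix.finite_real_spectrum (A := M)).bddAbove
  have hbddB : BddBelow (spectrum ℝ M) := (Matrix.finite_real_spectrum (A := M)).bddBelow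
  have hle : ∀ i, hM.eigenvalues i ≤ sSup (spectrum ℝ M) :=
    fun i => le_csSup hbddA (hM.eigenvalues_mem_spectrum_real i)
  have hge : ∀ i, sInf (spectrum ℝ M) ≤ hM.eigenvalues i :=
    fun i => csInf_le hbddB (hM.eigenvalues_mem_spectrum_real i)
  rw [h1, h2]
  constructor
  · rw [Finset.mul_sum]
    exact Finset.sum_le_sum fun i _ => mul_le_mul_of_nonneg_right (hge i) (sq_nonneg _)
  · rw [Finset.mul_sum]
    exact Finset.sum_le_sum fun i _ => mul_le_mul_of_nonneg_right (hle i) (sq_nonneg _)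

lemma aux_spectrum_conj {n : ℕ} (A : Matrix (Fin n) (Fin n) ℝ) (d : Fin n → ℝ)
    (hd : ∀ i, 0 < d i) :
    spectrum ℝ (A * diagonal d) =
      spectrum ℝ (diagonal (fun i => Real.sqrt (d i)) * A * diagonal (fun i => Real.sqrt (d i))) := by
  set s : Fin n → ℝ := fun i => Real.sqrt (d i) with hs
  have hspos : ∀ i, 0 < s i := fun i => Real.sqrt_pos.mpr (hd i)
  set S : Matrix (Fin n) (Fin n) ℝ := diagonal s with hS
  have hSS : S * S = diagonal d := by
    rw [hS, Matrix.diagonal_mul_diagonal]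
    have : (fun i => s i * s i) = d := funext fun i => Real.mul_self_sqrt (hd i).le
    rw [this]
  have hdet : IsUnit S.det := by
    rw [hS, Matrix.det_diagonal]
    exact (Finset.prod_pos fun i _ => hspos i).ne'.isUnit
  have hU : IsUnit S := (Matrix.isUnit_iff_isUnit_det S).mpr hdet
  obtain ⟨u, hu⟩ := hU
  have hinv : (↑u⁻¹ : Matrix (Fin n) (Fin n) ℝ) = S⁻¹ := by
    rw [Matrix.coe_units_inv, hu]
  have key : S * A * S = (u : Matrix (Fin n) (Fin n) ℝ) * (A * diagonal d) *
      (↑u⁻¹ : Matrix (Fin n) (Fin n) ℝ) := by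
    rw [hu, hinv, ← hSS]
    simp only [Matrix.mul_assoc]
    rw [Matrix.mul_nonsing_inv S hdet, Matrix.mul_one]
  rw [key, spectrum.units_conjugate]

lemma aux_posdef_conj {n : ℕ} {A : Matrix (Fin n) (Fin n) ℝ} (hA : A.PosDef)
    (s : Fin n → ℝ) (hs : ∀ i, 0 < s i) :
    (diagonal s * A * diagonal s).PosDef := by
  rw [Matrix.posDef_iff_dotProduct_mulVec]
  constructor
  · have h1 : (diagonal s).IsHermitian := by
      apply Matrix.isHermitian_diagonal_of_self_adjoint
      funext i; exact star_trivial _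
    rw [Matrix.IsHermitian, Matrix.conjTranspose_mul, Matrix.conjTranspose_mul, h1.eq,
      hA.1.eq, Matrix.mul_assoc]
  · intro x hx
    have hSx : (diagonal s) *ᵥ x ≠ 0 := by
      intro hcon
      apply hx
      funext i
      have := congrFun hcon i
      simp only [Matrix.mulVec_diagonal, Pi.zero_apply] at this
      exact (mul_eq_zero.mp this).elim (fun h => absurd h (hs i).ne') id
    have h2 := hA.dotProduct_mulVec_pos hSx
    simp only [star_trivial] at h2 ⊢
    have hvw : x ᵥ* diagonal s = diagonal s *ᵥ x := by
      funext i; simp [Matrix.vecMul_diagonal, Matrix.mulVec_diagonal, mul_comm]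
    have heq : x ⬝ᵥ ((diagonal s * A * diagonal s) *ᵥ x)
        = (diagonal s *ᵥ x) ⬝ᵥ (A *ᵥ (diagonal s *ᵥ x)) := by
      rw [← Matrix.mulVec_mulVec, ← Matrix.mulVec_mulVec, Matrix.dotProduct_mulVec, hvw]
    rw [heq]
    exact h2

lemma aux_sqrt_deriv (c : ℝ) : HasDerivAt (fun t : ℝ => Real.sqrt (1 + t * c)) (c / 2) 0 := by
  have h1 : HasDerivAt (fun t : ℝ => 1 + t * c) c 0 := by
    simpa using ((hasDerivAt_id (0:ℝ)).mul_const c).const_add 1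
  have h2 : HasDerivAt Real.sqrt (1 / (2 * Real.sqrt 1)) (1 + 0 * c) := by
    simpa using Real.hasDerivAt_sqrt one_ne_zero
  have := h2.comp 0 h1
  simpa [Real.sqrt_one, Function.comp_def] using this.congr_deriv (by rw [Real.sqrt_one]; ring)

lemma aux_hasDerivAt_q {n : ℕ} (A : Matrix (Fin n) (Fin n) ℝ) (hA : A.IsHermitian)
    (lam : ℝ) (x : Fin n → ℝ) (heig : A.mulVec x = lam • x) (h : Fin n → ℝ) :
    HasDerivAt (fun t : ℝ => ∑ i, ∑ j,
        (Real.sqrt (1 + t * h i) * x i) * (A i j * (Real.sqrt (1 + t * h j) * x j)))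
      (lam * ∑ i, h i * (x i * x i)) 0 := by
  have hAx : ∀ i, ∑ j, A i j * x j = lam * x i := fun i => by
    have := congrFun heig i
    simpa [Matrix.mulVec, dotProduct] using this
  have hsymm : ∀ i j, A j i = A i j := fun i j => by
    have := congrFun (congrFun hA.eq i) j
    simpa [Matrix.conjTranspose_apply] using this
  have hterm : ∀ i j : Fin n, HasDerivAt (fun t : ℝ =>
      (Real.sqrt (1 + t * h i) * x i) * (A i j * (Real.sqrt (1 + t * h j) * x j)))
      (h i / 2 * x i * (A i j * x j) + x i * (A i j * (h j / 2 * x j))) 0 := by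
    intro i j
    have hf : HasDerivAt (fun t : ℝ => Real.sqrt (1 + t * h i) * x i) (h i / 2 * x i) 0 :=
      (aux_sqrt_deriv (h i)).mul_const (x i)
    have hgg : HasDerivAt (fun t : ℝ => A i j * (Real.sqrt (1 + t * h j) * x j))
        (A i j * (h j / 2 * x j)) 0 :=
      ((aux_sqrt_deriv (h j)).mul_const (x j)).const_mul (A i j)
    have := hf.mul hgg
    simpa [Real.sqrt_one, Pi.mul_def] using this
  have hsum : HasDerivAt (fun t : ℝ => ∑ i, ∑ j,
      (Real.sqrt (1 + t * h i) * x i) * (A i j * (Real.sqrt (1 + t * h j) * x j)))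
      (∑ i, ∑ j, (h i / 2 * x i * (A i j * x j) + x i * (A i j * (h j / 2 * x j)))) 0 := by
    apply HasDerivAt.fun_sum
    intro i _
    exact HasDerivAt.fun_sum fun j _ => hterm i j
  have key : ∑ i, ∑ j, (h i / 2 * x i * (A i j * x j) + x i * (A i j * (h j / 2 * x j)))
      = lam * ∑ i, h i * (x i * x i) := by
    have split : ∑ i, ∑ j, (h i / 2 * x i * (A i j * x j) + x i * (A i j * (h j / 2 * x j)))
        = (∑ i, ∑ j, h i / 2 * x i * (A i j * x j))
          + ∑ i, ∑ j, x i * (A i j * (h j / 2 * x j)) := by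
      rw [← Finset.sum_add_distrib]
      exact Finset.sum_congr rfl fun i _ => by rw [← Finset.sum_add_distrib]
    rw [split]
    have S1 : (∑ i, ∑ j, h i / 2 * x i * (A i j * x j)) = ∑ i, h i / 2 * x i * (lam * x i) := by
      refine Finset.sum_congr rfl fun i _ => ?_
      rw [← Finset.mul_sum, hAx i]
    have S2 : (∑ i, ∑ j, x i * (A i j * (h j / 2 * x j)))
        = ∑ j, h j / 2 * x j * (lam * x j) := by
      rw [Finset.sum_comm]
      refine Finset.sum_congr rfl fun j _ => ?_
      have : ∀ i, x i * (A i j * (h j / 2 * x j)) = h j / 2 * x j * (A j i * x i) := by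
        intro i; rw [hsymm]; ring
      rw [Finset.sum_congr rfl fun i _ => this i, ← Finset.mul_sum, hAx j]
    rw [S1, S2, ← Finset.sum_add_distrib, Finset.mul_sum]
    exact Finset.sum_congr rfl fun i _ => by ring
  rw [← key]
  exact hsum


lemma aux_q_zero {n : ℕ} (A : Matrix (Fin n) (Fin n) ℝ) (lam : ℝ) (x : Fin n → ℝ)
    (heig : A.mulVec x = lam • x) (hunit : ∑ i, x i * x i = 1) (h : Fin n → ℝ) :
    ∑ i, ∑ j, (Real.sqrt (1 + 0 * h i) * x i) * (A i j * (Real.sqrt (1 + 0 * h j) * x j))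
      = lam := by
  have hAx : ∀ i, ∑ j, A i j * x j = lam * x i := fun i => by
    have := congrFun heig i
    simpa [Matrix.mulVec, dotProduct] using this
  simp only [zero_mul, add_zero, Real.sqrt_one, one_mul]
  calc ∑ i, ∑ j, x i * (A i j * x j) = ∑ i, x i * (lam * x i) := by
        refine Finset.sum_congr rfl fun i _ => ?_
        rw [← Finset.mul_sum, hAx i]
    _ = lam * ∑ i, x i * x i := by
        rw [Finset.mul_sum]; exact Finset.sum_congr rfl fun i _ => by ring
    _ = lam := by rw [hunit, mul_one]

lemma aux_q_eq_dot {n : ℕ} (A : Matrix (Fin n) (Fin n) ℝ) (s x : Fin n → ℝ) :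
    ∑ i, ∑ j, (s i * x i) * (A i j * (s j * x j))
      = x ⬝ᵥ ((diagonal s * A * diagonal s) *ᵥ x) := by
  have hs : diagonal s *ᵥ x = fun j => s j * x j := by
    funext j; exact Matrix.mulVec_diagonal _ _ _
  rw [← Matrix.mulVec_mulVec, ← Matrix.mulVec_mulVec, hs]
  simp only [dotProduct, Matrix.mulVec_diagonal]
  refine Finset.sum_congr rfl fun i _ => ?_
  rw [show (A *ᵥ fun j => s j * x j) i = ∑ j, A i j * (s j * x j) from rfl,
    Finset.mul_sum, Finset.mul_sum]
  exact Finset.sum_congr rfl fun j _ => by ring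

lemma aux_sInf_pos {n : ℕ} (hn : 0 < n) {M : Matrix (Fin n) (Fin n) ℝ} (hM : M.PosDef) :
    0 < sInf (spectrum ℝ M) := by
  haveI : Nonempty (Fin n) := ⟨⟨0, hn⟩⟩
  have hspec := hM.isHermitian.spectrum_real_eq_range_eigenvalues
  have hne : (spectrum ℝ M).Nonempty := by rw [hspec]; exact Set.range_nonempty _
  have hmem := hne.csInf_mem (Matrix.finite_real_spectrum (A := M))
  rw [hspec] at hmem ⊢
  obtain ⟨i, hi⟩ := hmem
  rw [← hi]
  exact hM.eigenvalues_pos i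

theorem kappa_stationary_iff_squares_eq (n : ℕ)
    (A : Matrix (Fin n) (Fin n) ℝ) (hA : A.PosDef)
    (lam1 lamn : ℝ) (x1 xn : Fin n → ℝ)
    (hlam1 : lam1 = sSup (spectrum ℝ A)) (hlamn : lamn = sInf (spectrum ℝ A))
    (hx1unit : ∑ i, x1 i * x1 i = 1) (hxnunit : ∑ i, xn i * xn i = 1)
    (heig1 : A.mulVec x1 = lam1 • x1) (heign : A.mulVec xn = lamn • xn)
    (hsimple1 : A.charpoly.rootMultiplicity lam1 = 1)
    (hsimplen : A.charpoly.rootMultiplicity lamn = 1)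
    (g : Fin n → ℝ)
    (hg : ∀ h : Fin n → ℝ,
      HasDerivAt
        (fun t : ℝ =>
          sSup (spectrum ℝ (A * Matrix.diagonal ((fun _ => (1 : ℝ)) + t • h))) /
          sInf (spectrum ℝ (A * Matrix.diagonal ((fun _ => (1 : ℝ)) + t • h))))
        (∑ i, g i * h i) 0) :
    g = 0 ↔ (fun i => x1 i * x1 i) = (fun i => xn i * xn i) := by
  rcases Nat.eq_zero_or_pos n with hn | hn
  · subst hn
    exact ⟨fun _ => funext fun i => i.elim0, fun _ => funext fun i => i.elim0⟩
  haveI : Nonempty (Fin n) := ⟨⟨0, hn⟩⟩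
  -- positivity of lam1, lamn
  have hx1ne : x1 ≠ 0 := by
    intro hc
    rw [hc] at hx1unit
    simpa using hx1unit
  have hxnne : xn ≠ 0 := by
    intro hc
    rw [hc] at hxnunit
    simpa using hxnunit
  have hlam1pos : 0 < lam1 := by
    have := hA.dotProduct_mulVec_pos hx1ne
    simp only [star_trivial, heig1] at this
    have hdot : x1 ⬝ᵥ (lam1 • x1) = lam1 := by
      simp only [dotProduct, Pi.smul_apply, smul_eq_mul]
      rw [show ∀ s : ℝ, (∑ i, x1 i * (s * x1 i)) = s * ∑ i, x1 i * x1 i from fun s => by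
        rw [Finset.mul_sum]; exact Finset.sum_congr rfl fun i _ => by ring, hx1unit, mul_one]
    rwa [hdot] at this
  have hlamnpos : 0 < lamn := by
    have := hA.dotProduct_mulVec_pos hxnne
    simp only [star_trivial, heign] at this
    have hdot : xn ⬝ᵥ (lamn • xn) = lamn := by
      simp only [dotProduct, Pi.smul_apply, smul_eq_mul]
      rw [show ∀ s : ℝ, (∑ i, xn i * (s * xn i)) = s * ∑ i, xn i * xn i from fun s => by
        rw [Finset.mul_sum]; exact Finset.sum_congr rfl fun i _ => by ring, hxnunit, mul_one]
    rwa [hdot] at this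
  -- the key gradient identity
  have key : ∀ h : Fin n → ℝ, ∑ i, g i * h i
      = lam1 / lamn * ((∑ i, h i * (x1 i * x1 i)) - ∑ i, h i * (xn i * xn i)) := by
    intro h
    set q1 : ℝ → ℝ := fun t => ∑ i, ∑ j,
      (Real.sqrt (1 + t * h i) * x1 i) * (A i j * (Real.sqrt (1 + t * h j) * x1 j)) with hq1def
    set qn : ℝ → ℝ := fun t => ∑ i, ∑ j,
      (Real.sqrt (1 + t * h i) * xn i) * (A i j * (Real.sqrt (1 + t * h j) * xn j)) with hqndef
    have hq1' : HasDerivAt q1 (lam1 * ∑ i, h i * (x1 i * x1 i)) 0 :=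
      aux_hasDerivAt_q A hA.1 lam1 x1 heig1 h
    have hqn' : HasDerivAt qn (lamn * ∑ i, h i * (xn i * xn i)) 0 :=
      aux_hasDerivAt_q A hA.1 lamn xn heign h
    have hq10 : q1 0 = lam1 := aux_q_zero A lam1 x1 heig1 hx1unit h
    have hqn0 : qn 0 = lamn := aux_q_zero A lamn xn heign hxnunit h
    have hphi : HasDerivAt (fun t => q1 t / qn t)
        ((lam1 * (∑ i, h i * (x1 i * x1 i)) * qn 0
          - q1 0 * (lamn * ∑ i, h i * (xn i * xn i))) / qn 0 ^ 2) 0 :=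
      hq1'.div hqn' (by rw [hqn0]; exact hlamnpos.ne')
    set f : ℝ → ℝ := fun t : ℝ =>
      sSup (spectrum ℝ (A * Matrix.diagonal ((fun _ => (1 : ℝ)) + t • h))) /
      sInf (spectrum ℝ (A * Matrix.diagonal ((fun _ => (1 : ℝ)) + t • h))) with hfdef
    have hf : HasDerivAt f (∑ i, g i * h i) 0 := hg h
    set D : ℝ :=
      (lam1 * (∑ i, h i * (x1 i * x1 i)) * qn 0
        - q1 0 * (lamn * ∑ i, h i * (xn i * xn i))) / qn 0 ^ 2 with hDdef
    have hF : HasDerivAt (fun t => f t - q1 t / qn t) (∑ i, g i * h i - D) 0 := hf.sub hphi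
    -- f t = sSup/sInf over conjugated matrix, and lower bound by q1/qn
    have hdiag : ∀ t : ℝ, ((fun _ => (1 : ℝ)) + t • h) = fun i => 1 + t * h i := by
      intro t; funext i; simp
    have hf0 : f 0 = q1 0 / qn 0 := by
      rw [hq10, hqn0, hfdef]
      simp only [zero_smul, add_zero]
      rw [show Matrix.diagonal (fun _ => (1:ℝ)) = (1 : Matrix (Fin n) (Fin n) ℝ) from
        Matrix.diagonal_one, Matrix.mul_one, ← hlam1, ← hlamn]
    have hmin : IsLocalMin (fun t => f t - q1 t / qn t) 0 := by
      have hev : ∀ᶠ t in nhds (0:ℝ), ∀ i, 0 < 1 + t * h i := by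
        rw [Filter.eventually_all]
        intro i
        have hcont : Continuous fun t : ℝ => 1 + t * h i := by continuity
        have ht : Filter.Tendsto (fun t : ℝ => 1 + t * h i) (nhds 0) (nhds 1) := by
          have := hcont.tendsto 0
          simpa using this
        exact ht.eventually (eventually_gt_nhds one_pos)
      refine hev.mono fun t ht => ?_
      have hf0' : (fun t => f t - q1 t / qn t) 0 = 0 := by simp [hf0]
      rw [hf0']
      -- show 0 ≤ f t - q1 t / qn t
      set dt : Fin n → ℝ := fun i => 1 + t * h i with hdt
      set st : Fin n → ℝ := fun i => Real.sqrt (dt i) with hst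
      have hstpos : ∀ i, 0 < st i := fun i => Real.sqrt_pos.mpr (ht i)
      set M : Matrix (Fin n) (Fin n) ℝ := diagonal st * A * diagonal st with hM
      have hMpos : M.PosDef := aux_posdef_conj hA st hstpos
      have hspec : spectrum ℝ (A * Matrix.diagonal ((fun _ => (1 : ℝ)) + t • h))
          = spectrum ℝ M := by
        rw [hdiag t]
        exact aux_spectrum_conj A dt ht
      have hq1t : q1 t = x1 ⬝ᵥ (M *ᵥ x1) := aux_q_eq_dot A st x1
      have hqnt : qn t = xn ⬝ᵥ (M *ᵥ xn) := aux_q_eq_dot A st xn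
      have hray1 := (aux_rayleigh hMpos.1 x1).2
      have hrayn := (aux_rayleigh hMpos.1 xn).1
      have hx1dot : x1 ⬝ᵥ x1 = 1 := hx1unit
      have hxndot : xn ⬝ᵥ xn = 1 := hxnunit
      rw [hx1dot, mul_one] at hray1
      rw [hxndot, mul_one] at hrayn
      have hsInfpos : 0 < sInf (spectrum ℝ M) := aux_sInf_pos hn hMpos
      have hSupInf : sInf (spectrum ℝ M) ≤ sSup (spectrum ℝ M) := by
        have hne : (spectrum ℝ M).Nonempty := by
          rw [hMpos.isHermitian.spectrum_real_eq_range_eigenvalues]; exact Set.range_nonempty _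
        exact csInf_le_csSup (hb := (Matrix.finite_real_spectrum (A := M)).bddBelow)
          (ha := (Matrix.finite_real_spectrum (A := M)).bddAbove) hne
      have hle : q1 t / qn t ≤ f t := by
        rw [hfdef]
        simp only
        rw [hspec, hq1t, hqnt]
        exact div_le_div₀ (le_trans hsInfpos.le hSupInf) hray1 hsInfpos hrayn
      linarith
    have hzero : ∑ i, g i * h i - D = 0 := hmin.hasDerivAt_eq_zero hF
    have hDval : D = lam1 / lamn * ((∑ i, h i * (x1 i * x1 i)) - ∑ i, h i * (xn i * xn i)) := by
      rw [hDdef, hq10, hqn0]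
      field_simp
    linarith [hzero, hDval.symm ▸ hzero]
  -- extract componentwise values of g
  have hgj : ∀ j, g j = lam1 / lamn * (x1 j * x1 j - xn j * xn j) := by
    intro j
    have := key (Pi.single j 1)
    simpa [Pi.single_apply, mul_ite, Finset.sum_ite_eq', mul_comm] using this
  have hkpos : 0 < lam1 / lamn := div_pos hlam1pos hlamnpos
  constructor
  · intro hg0
    funext i
    have := hgj i
    rw [hg0] at this
    simp only [Pi.zero_apply] at this
    have : x1 i * x1 i - xn i * xn i = 0 := by
      by_contra hne
      exact hne (by
        have := mul_eq_zero.mp this.symm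
        rcases this with h1 | h2
        · exact absurd h1 hkpos.ne'
        · exact h2)
    linarith
  · intro hsq
    funext i
    have hi := congrFun hsq i
    rw [Pi.zero_apply, hgj i, hi]
    ring
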